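/- Let G ⊆ ℝ² and suppose there exist constants M > 0 and δ ≥ 0 such that for all (x₁,x₂), (y₁,y₂) ∈ G one has |x₂ − y₂| ≤ (M/10)|x₁ − y₁| + δ/10. Then there exists a function F : ℝ → ℝ with Lipschitz constant at most M such that |x₂ − F(x₁)| ≤ δ for every (x₁,x₂) ∈ G. -/
import Mathlib


/-- Explicit rectifiability (quantitative Lipschitz extension): if all pairs of points
of `G ⊆ ℝ²` satisfy `|x₂ − y₂| ≤ (M/10)|x₁ − y₁| + δ/10`, then there is an
`M`-Lipschitz function `F : ℝ → ℝ` with `|x₂ − F x₁| ≤ δ` on `G`. -/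
theorem stmt16 (G : Set (ℝ × ℝ)) (M δ : ℝ) (hM : 0 < M) (hδ : 0 ≤ δ)
    (h : ∀ p ∈ G, ∀ q ∈ G, |p.2 - q.2| ≤ M / 10 * |p.1 - q.1| + δ / 10) :
    ∃ F : ℝ → ℝ, LipschitzWith (Real.toNNReal M) F ∧ ∀ p ∈ G, |p.2 - F p.1| ≤ δ := by
  rcases G.eq_empty_or_nonempty with hG | ⟨q, hq⟩
  · exact ⟨0, LipschitzWith.const' 0, by simp [hG]⟩
  set g : ℝ → ℝ × ℝ → ℝ := fun x y => y.2 - M * |x - y.1| with hg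
  set F : ℝ → ℝ := fun x => sSup ((g x) '' G) with hF
  have hne : ∀ x, ((g x) '' G).Nonempty := fun x => ⟨g x q, q, hq, rfl⟩
  have hbdd : ∀ x, BddAbove ((g x) '' G) := by
    intro x
    refine ⟨q.2 + M / 10 * |x - q.1| + δ / 10, ?_⟩
    rintro a ⟨y, hy, rfl⟩
    have h1 := h y hy q hq
    have h2 : |y.1 - q.1| ≤ |y.1 - x| + |x - q.1| := abs_sub_le _ _ _
    have h3 : y.2 - q.2 ≤ |y.2 - q.2| := le_abs_self _
    have h4 : |y.1 - x| = |x - y.1| := abs_sub_comm _ _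
    simp only [hg]
    nlinarith [abs_nonneg (x - y.1)]
  have key : ∀ x x', F x ≤ F x' + M * |x - x'| := by
    intro x x'
    refine csSup_le (hne x) ?_
    rintro a ⟨y, hy, rfl⟩
    have h1 : g x y ≤ g x' y + M * |x - x'| := by
      have : |x' - y.1| ≤ |x' - x| + |x - y.1| := abs_sub_le _ _ _
      have h4 : |x' - x| = |x - x'| := abs_sub_comm _ _
      simp only [hg]
      nlinarith
    exact h1.trans (by linarith [le_csSup (hbdd x') ⟨y, hy, rfl⟩])
  refine ⟨F, ?_, ?_⟩
  · refine LipschitzWith.of_dist_le_mul fun x x' => ?_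
    rw [Real.dist_eq, Real.dist_eq, Real.coe_toNNReal M hM.le]
    rw [abs_sub_le_iff]
    constructor
    · linarith [key x x']
    · have := key x' x
      rw [abs_sub_comm] at this
      linarith
  · intro p hp
    have hlow : p.2 ≤ F p.1 := by
      have := le_csSup (hbdd p.1) ⟨p, hp, rfl⟩
      simpa [hg] using this
    have hupp : F p.1 ≤ p.2 + δ / 10 := by
      refine csSup_le (hne p.1) ?_
      rintro a ⟨y, hy, rfl⟩
      have h1 := h y hy p hp
      have h3 : y.2 - p.2 ≤ |y.2 - p.2| := le_abs_self _
      have h4 : |y.1 - p.1| = |p.1 - y.1| := abs_sub_comm _ _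
      simp only [hg]
      nlinarith [abs_nonneg (p.1 - y.1)]
    rw [abs_sub_le_iff]
    constructor <;> linarith
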